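/- There exists exactly one admissible vector v* ∈ ℝ^d, and it is the unique global minimizer of L̂. (Theorem 1 of the paper, general case of a compact set of supporting data.) -/

import Mathlib

open scoped InnerProductSpace
open Set Filter

noncomputable section

/-- The lower envelope `Φ(v) = min_{(H,p)∈S} (−H + ⟨p, v⟩)` (attained by compactness). -/
def lowerEnvS {d : ℕ} (S : Set (ℝ × EuclideanSpace ℝ (Fin d)))
    (v : EuclideanSpace ℝ (Fin d)) : ℝ :=
  sInf ((fun q : ℝ × EuclideanSpace ℝ (Fin d) => -q.1 + ⟪q.2, v⟫_ℝ) '' S)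

/-- The active set `I(v)` of pairs `(H,p) ∈ S` attaining the minimum defining `Φ(v)`. -/
def activeSetS {d : ℕ} (S : Set (ℝ × EuclideanSpace ℝ (Fin d)))
    (v : EuclideanSpace ℝ (Fin d)) : Set (ℝ × EuclideanSpace ℝ (Fin d)) :=
  {q ∈ S | -q.1 + ⟪q.2, v⟫_ℝ = lowerEnvS S v}

/-- `v` is admissible if `∇L(v)` lies in the convex hull of the active momenta. -/
def IsAdmissibleS {d : ℕ} (L : EuclideanSpace ℝ (Fin d) → ℝ)
    (S : Set (ℝ × EuclideanSpace ℝ (Fin d)))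
    (v : EuclideanSpace ℝ (Fin d)) : Prop :=
  gradient L v ∈ convexHull ℝ (Prod.snd '' activeSetS S v)

/-- Auxiliary: sum over `Fin n` of a padded family equals sum over `Fin m`. -/
lemma sum_dite_fin {M : Type*} [AddCommMonoid M] {m n : ℕ} (hmn : m ≤ n) (f : Fin m → M) :
    ∑ i : Fin n, (if h : (i : ℕ) < m then f ⟨i, h⟩ else 0) = ∑ j : Fin m, f j := by
  have h1 : ∑ i : Fin n, (if h : (i : ℕ) < m then f ⟨i, h⟩ else 0)
      = ∑ i ∈ Finset.range n, (if h : i < m then f ⟨i, h⟩ else 0) :=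
    Fin.sum_univ_eq_sum_range (fun i => if h : i < m then f ⟨i, h⟩ else 0) n
  have h2 : ∑ j : Fin m, f j
      = ∑ i ∈ Finset.range m, (if h : i < m then f ⟨i, h⟩ else 0) := by
    rw [← Fin.sum_univ_eq_sum_range (fun i => if h : i < m then f ⟨i, h⟩ else 0) m]
    exact Finset.sum_congr rfl fun j _ => by rw [dif_pos j.isLt]
  rw [h1, h2]
  exact (Finset.sum_subset (Finset.range_subset_range.2 hmn)
    (fun x _ hxm => dif_neg (by simpa using hxm))).symm

/-- In Euclidean space, the convex hull of a nonempty compact set is compact (Carathéodory). -/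
lemma isCompact_convexHull_of_isCompact {d : ℕ} {K : Set (EuclideanSpace ℝ (Fin d))}
    (hK : IsCompact K) (hne : K.Nonempty) : IsCompact (convexHull ℝ K) := by
  obtain ⟨k₀, hk₀⟩ := hne
  set n := d + 1 with hn
  set F : (Fin n → ℝ) × (Fin n → EuclideanSpace ℝ (Fin d)) → EuclideanSpace ℝ (Fin d) :=
    fun p => ∑ i, p.1 i • p.2 i with hF
  have hFcont : Continuous F :=
    continuous_finset_sum _ fun i _ =>
      ((continuous_apply i).comp continuous_fst).smul ((continuous_apply i).comp continuous_snd)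
  have hT : IsCompact ((stdSimplex ℝ (Fin n)) ×ˢ (Set.pi Set.univ fun _ : Fin n => K)) :=
    (isCompact_stdSimplex (𝕜 := ℝ) (ι := Fin n)).prod (isCompact_univ_pi fun _ => hK)
  have himage : F '' ((stdSimplex ℝ (Fin n)) ×ˢ (Set.pi Set.univ fun _ : Fin n => K))
      = convexHull ℝ K := by
    apply Set.Subset.antisymm
    · rintro x ⟨⟨w, z⟩, ⟨⟨hw0, hw1⟩, hz⟩, rfl⟩
      have hsum : (0:ℝ) < ∑ i : Fin n, w i := by rw [hw1]; norm_num
      have := Finset.centerMass_mem_convexHull (Finset.univ : Finset (Fin n))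
        (fun i _ => hw0 i) hsum (fun i _ => hz i (Set.mem_univ i))
      rwa [Finset.centerMass_eq_of_sum_1 _ _ hw1] at this
    · intro x hx
      obtain ⟨ι, hft, z, w, hrange, hindep, hpos, hsum1, hsumx⟩ :=
        eq_pos_convex_span_of_mem_convexHull hx
      set m := Fintype.card ι with hm
      have hcard : m ≤ n := by
        have h1 := hindep.card_le_finrank_succ
        have h2 : Module.finrank ℝ (vectorSpan ℝ (Set.range z)) ≤ d := by
          have := Submodule.finrank_le (vectorSpan ℝ (Set.range z))
          rwa [finrank_euclideanSpace_fin] at this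
        omega
      set e := (Fintype.equivFin ι).symm with he
      refine ⟨(fun i => if h : (i : ℕ) < m then w (e ⟨i, h⟩) else 0,
               fun i => if h : (i : ℕ) < m then z (e ⟨i, h⟩) else k₀), ⟨⟨?_, ?_⟩, ?_⟩, ?_⟩
      · intro i
        dsimp only
        split_ifs with h
        · exact (hpos _).le
        · exact le_refl 0
      · have := sum_dite_fin hcard (fun j => w (e j))
        dsimp only
        rw [this, Equiv.sum_comp e w, hsum1]
      · intro i _
        dsimp only
        split_ifs with h
        · exact hrange (Set.mem_range_self _)
        · exact hk₀
      · have h1 : ∀ i : Fin n,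
            (if h : (i : ℕ) < m then w (e ⟨i, h⟩) else 0) •
              (if h : (i : ℕ) < m then z (e ⟨i, h⟩) else k₀)
            = (if h : (i : ℕ) < m then w (e ⟨i, h⟩) • z (e ⟨i, h⟩) else 0) := by
          intro i
          split_ifs with h
          · rfl
          · rw [zero_smul]
        show (∑ i : Fin n, _) = x
        calc ∑ i : Fin n,
              (if h : (i : ℕ) < m then w (e ⟨i, h⟩) else 0) •
                (if h : (i : ℕ) < m then z (e ⟨i, h⟩) else k₀)
            = ∑ i : Fin n, (if h : (i : ℕ) < m then w (e ⟨i, h⟩) • z (e ⟨i, h⟩) else 0) :=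
              Finset.sum_congr rfl fun i _ => h1 i
          _ = ∑ j : Fin m, w (e j) • z (e j) := sum_dite_fin hcard (fun j => w (e j) • z (e j))
          _ = ∑ i : ι, w i • z i := Equiv.sum_comp e (fun i => w i • z i)
          _ = x := hsumx
  rw [← himage]
  exact hT.image hFcont

section EnvLemmas

variable {d : ℕ} {S : Set (ℝ × EuclideanSpace ℝ (Fin d))}

lemma contPairAux (v : EuclideanSpace ℝ (Fin d)) :
    Continuous fun q : ℝ × EuclideanSpace ℝ (Fin d) => -q.1 + ⟪q.2, v⟫_ℝ :=
  (continuous_fst.neg).add (continuous_snd.inner continuous_const)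

lemma lowerEnvS_le (hc : IsCompact S) {q : ℝ × EuclideanSpace ℝ (Fin d)} (hq : q ∈ S)
    (v : EuclideanSpace ℝ (Fin d)) : lowerEnvS S v ≤ -q.1 + ⟪q.2, v⟫_ℝ :=
  csInf_le (hc.image (contPairAux v)).bddBelow (Set.mem_image_of_mem _ hq)

lemma exists_active (hS : S.Nonempty) (hc : IsCompact S) (v : EuclideanSpace ℝ (Fin d)) :
    ∃ q ∈ S, -q.1 + ⟪q.2, v⟫_ℝ = lowerEnvS S v := by
  have h := (hc.image (contPairAux v)).sInf_mem (hS.image _)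
  obtain ⟨q, hq, hval⟩ := h
  exact ⟨q, hq, hval⟩

lemma lowerEnvS_continuous (hS : S.Nonempty) (hc : IsCompact S) :
    Continuous (lowerEnvS S) := by
  obtain ⟨M, hM⟩ := (hc.image (continuous_snd.norm)).bddAbove
  have hM' : ∀ q ∈ S, ‖q.2‖ ≤ M := fun q hq => hM (Set.mem_image_of_mem _ hq)
  have hM0 : 0 ≤ M := by
    obtain ⟨q, hq⟩ := hS
    exact (norm_nonneg q.2).trans (hM' q hq)
  have key : ∀ a b : EuclideanSpace ℝ (Fin d),
      lowerEnvS S a ≤ lowerEnvS S b + M * ‖a - b‖ := by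
    intro a b
    obtain ⟨q, hqS, hq⟩ := exists_active hS hc b
    have h1 : lowerEnvS S a ≤ -q.1 + ⟪q.2, a⟫_ℝ := lowerEnvS_le hc hqS a
    have h2 : ⟪q.2, a⟫_ℝ = ⟪q.2, b⟫_ℝ + ⟪q.2, a - b⟫_ℝ := by
      rw [inner_sub_right]; ring
    have h3 : ⟪q.2, a - b⟫_ℝ ≤ M * ‖a - b‖ :=
      (real_inner_le_norm _ _).trans
        (mul_le_mul_of_nonneg_right (hM' q hqS) (norm_nonneg _))
    calc lowerEnvS S a ≤ -q.1 + ⟪q.2, a⟫_ℝ := h1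
      _ = (-q.1 + ⟪q.2, b⟫_ℝ) + ⟪q.2, a - b⟫_ℝ := by rw [h2]; ring
      _ ≤ lowerEnvS S b + M * ‖a - b‖ := by rw [hq]; linarith
  have hlip : LipschitzWith (Real.toNNReal M) (lowerEnvS S) := by
    apply LipschitzWith.of_dist_le_mul
    intro x y
    rw [Real.dist_eq, dist_eq_norm, abs_le, Real.coe_toNNReal M hM0]
    have hnorm : ‖y - x‖ = ‖x - y‖ := norm_sub_rev y x
    constructor
    · linarith [key y x, hnorm ▸ key y x]
    · linarith [key x y]
  exact hlip.continuous

end EnvLemmas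

section GradLemmas

variable {d : ℕ} {L : EuclideanSpace ℝ (Fin d) → ℝ}

lemma hasDerivAt_line (hdiff : Differentiable ℝ L) (x z : EuclideanSpace ℝ (Fin d)) :
    HasDerivAt (fun t : ℝ => L (x + t • z)) ⟪gradient L x, z⟫_ℝ 0 := by
  have h1 : HasFDerivAt L (InnerProductSpace.toDual ℝ _ (gradient L x)) x :=
    hasGradientAt_iff_hasFDerivAt.mp (hdiff x).hasGradientAt
  have h2 : HasDerivAt (fun t : ℝ => x + t • z) z 0 := by
    simpa using ((hasDerivAt_id (0 : ℝ)).smul_const z).const_add x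
  have h3 : HasFDerivAt L (InnerProductSpace.toDual ℝ _ (gradient L x)) (x + (0 : ℝ) • z) := by
    simpa using h1
  have h4 := h3.comp_hasDerivAt 0 h2
  rw [InnerProductSpace.toDual_apply_apply] at h4
  exact h4

lemma grad_ineq (hdiff : Differentiable ℝ L) (hconv : ConvexOn ℝ Set.univ L)
    (v u : EuclideanSpace ℝ (Fin d)) :
    L v + ⟪gradient L v, u - v⟫_ℝ ≤ L u := by
  set g : ℝ → ℝ := fun t => L (v + t • (u - v)) with hg
  have hder : HasDerivAt g ⟪gradient L v, u - v⟫_ℝ 0 := hasDerivAt_line hdiff v (u - v)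
  have hslope : ∀ t ∈ Set.Ioc (0 : ℝ) 1, slope g 0 t ≤ L u - L v := by
    intro t ht
    have hcomb : v + t • (u - v) = (1 - t) • v + t • u := by
      rw [smul_sub, sub_smul, one_smul]; abel
    have hLe := hconv.2 (Set.mem_univ v) (Set.mem_univ u)
      (by linarith [ht.2] : (0:ℝ) ≤ 1 - t) ht.1.le (by ring)
    rw [smul_eq_mul, smul_eq_mul, ← hcomb] at hLe
    have hnum : g t - g 0 ≤ t * (L u - L v) := by
      simp only [hg, zero_smul, add_zero]
      calc L (v + t • (u - v)) - L v ≤ ((1 - t) * L v + t * L u) - L v := by linarith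
        _ = t * (L u - L v) := by ring
    rw [slope_def_field, div_le_iff₀ (by linarith [ht.1] : (0:ℝ) < t - 0)]
    calc g t - g 0 ≤ t * (L u - L v) := hnum
      _ = (L u - L v) * (t - 0) := by ring
  have htend : Filter.Tendsto (slope g 0) (nhdsWithin 0 (Set.Ioi 0))
      (nhds ⟪gradient L v, u - v⟫_ℝ) :=
    ((hasDerivAt_iff_tendsto_slope.mp hder).mono_left
      (nhdsWithin_mono 0 (fun x hx => Set.mem_compl_singleton_iff.mpr (ne_of_gt hx))))
  have hev : ∀ᶠ t in nhdsWithin (0:ℝ) (Set.Ioi 0), slope g 0 t ≤ L u - L v := by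
    filter_upwards [Ioc_mem_nhdsGT_of_mem (Set.left_mem_Ico.mpr one_pos)] with t ht
    exact hslope t ht
  have := le_of_tendsto htend hev
  linarith

lemma strict_grad_ineq (hdiff : Differentiable ℝ L) (hconv : StrictConvexOn ℝ Set.univ L)
    (v u : EuclideanSpace ℝ (Fin d)) (hne : u ≠ v) :
    L v + ⟪gradient L v, u - v⟫_ℝ < L u := by
  have hmid := hconv.2 (Set.mem_univ v) (Set.mem_univ u) (Ne.symm hne)
    (by norm_num : (0:ℝ) < 1/2) (by norm_num : (0:ℝ) < 1/2) (by norm_num)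
  rw [smul_eq_mul, smul_eq_mul] at hmid
  have hm : (1/2 : ℝ) • v + (1/2 : ℝ) • u = v + (1/2 : ℝ) • (u - v) := by module
  rw [hm] at hmid
  have hgi := grad_ineq hdiff hconv.convexOn v (v + (1/2 : ℝ) • (u - v))
  rw [add_sub_cancel_left, real_inner_smul_right] at hgi
  linarith

end GradLemmas

/-- Theorem 1 (general compact case): there is exactly one admissible velocity, and it is
the unique global minimizer of `L̂(v) = L(v) − Φ(v)`. -/
theorem unique_admissible_velocity_compact {d : ℕ} (hd : 1 ≤ d)
    (L : EuclideanSpace ℝ (Fin d) → ℝ)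
    (hdiff : Differentiable ℝ L)
    (hconv : StrictConvexOn ℝ Set.univ L)
    (hsuper : Filter.Tendsto (fun v => L v / ‖v‖)
      (Filter.comap (fun v : EuclideanSpace ℝ (Fin d) => ‖v‖) Filter.atTop) Filter.atTop)
    (S : Set (ℝ × EuclideanSpace ℝ (Fin d)))
    (hS : S.Nonempty) (hScomp : IsCompact S) :
    ∃ vstar : EuclideanSpace ℝ (Fin d),
      IsAdmissibleS L S vstar ∧
      (∀ v, IsAdmissibleS L S v → v = vstar) ∧
      (∀ v, v ≠ vstar →
        L vstar - lowerEnvS S vstar < L v - lowerEnvS S v) := by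
  classical
  set Lh : EuclideanSpace ℝ (Fin d) → ℝ := fun v => L v - lowerEnvS S v with hLh
  -- Part A: every admissible point is a strict global minimizer of Lh
  have keyA : ∀ v, IsAdmissibleS L S v → ∀ u, u ≠ v → Lh v < Lh u := by
    intro v hadm u hne
    set C : Set (EuclideanSpace ℝ (Fin d)) :=
      {x | ∀ w, lowerEnvS S w ≤ lowerEnvS S v + ⟪x, w - v⟫_ℝ} with hC
    have hCconv : Convex ℝ C := by
      intro x hx y hy a b ha hb hab
      intro w
      have h1 := hx w
      have h2 := hy w
      have hinner : ⟪a • x + b • y, w - v⟫_ℝ = a * ⟪x, w - v⟫_ℝ + b * ⟪y, w - v⟫_ℝ := by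
        rw [inner_add_left, real_inner_smul_left, real_inner_smul_left]
      show lowerEnvS S w ≤ lowerEnvS S v + ⟪a • x + b • y, w - v⟫_ℝ
      rw [hinner]
      have e1 := mul_le_mul_of_nonneg_left h1 ha
      have e2 := mul_le_mul_of_nonneg_left h2 hb
      have d1 := mul_add a (lowerEnvS S v) (⟪x, w - v⟫_ℝ)
      have d2 := mul_add b (lowerEnvS S v) (⟪y, w - v⟫_ℝ)
      have hsum : a * lowerEnvS S w + b * lowerEnvS S w = lowerEnvS S w := by
        rw [← add_mul, hab, one_mul]
      have hsum2 : a * lowerEnvS S v + b * lowerEnvS S v = lowerEnvS S v := by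
        rw [← add_mul, hab, one_mul]
      linarith
    have hsub : Prod.snd '' activeSetS S v ⊆ C := by
      rintro _ ⟨q, ⟨hqS, hqe⟩, rfl⟩ w
      have h1 : lowerEnvS S w ≤ -q.1 + ⟪q.2, w⟫_ℝ := lowerEnvS_le hScomp hqS w
      have h2 : ⟪q.2, w⟫_ℝ = ⟪q.2, v⟫_ℝ + ⟪q.2, w - v⟫_ℝ := by
        rw [inner_sub_right]; ring
      calc lowerEnvS S w ≤ -q.1 + ⟪q.2, w⟫_ℝ := h1
        _ = (-q.1 + ⟪q.2, v⟫_ℝ) + ⟪q.2, w - v⟫_ℝ := by rw [h2]; ring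
        _ = lowerEnvS S v + ⟪q.2, w - v⟫_ℝ := by rw [hqe]
    have hgC : gradient L v ∈ C := convexHull_min hsub hCconv hadm
    have h3 : lowerEnvS S u ≤ lowerEnvS S v + ⟪gradient L v, u - v⟫_ℝ := hgC u
    have h4 : L v + ⟪gradient L v, u - v⟫_ℝ < L u := strict_grad_ineq hdiff hconv v u hne
    show L v - lowerEnvS S v < L u - lowerEnvS S u
    linarith
  -- Part B: existence of a global minimizer of Lh
  obtain ⟨q₀, hq₀⟩ := hS
  have hScomp' := hScomp
  have hSne : S.Nonempty := ⟨q₀, hq₀⟩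
  have Φcont : Continuous (lowerEnvS S) := lowerEnvS_continuous hSne hScomp
  have Lhcont : Continuous Lh := (hdiff.continuous).sub Φcont
  set c : ℝ := ‖q₀.2‖ + |q₀.1| + |Lh 0| + 1 with hc
  have hev : ∀ᶠ y in Filter.atTop, ∀ v : EuclideanSpace ℝ (Fin d), ‖v‖ = y → c ≤ L v / ‖v‖ := by
    have := hsuper.eventually_ge_atTop c
    rwa [Filter.eventually_comap] at this
  obtain ⟨R, hR⟩ := Filter.eventually_atTop.mp hev
  have hcoer : ∀ v : EuclideanSpace ℝ (Fin d), max R 1 ≤ ‖v‖ → Lh 0 < Lh v := by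
    intro v hv
    have hv1 : (1:ℝ) ≤ ‖v‖ := le_trans (le_max_right R 1) hv
    have hvR : R ≤ ‖v‖ := le_trans (le_max_left R 1) hv
    have hvpos : (0:ℝ) < ‖v‖ := lt_of_lt_of_le one_pos hv1
    have hL : c ≤ L v / ‖v‖ := hR ‖v‖ hvR v rfl
    have hLv : c * ‖v‖ ≤ L v := by
      rw [le_div_iff₀ hvpos] at hL
      linarith
    have hΦ : lowerEnvS S v ≤ -q₀.1 + ⟪q₀.2, v⟫_ℝ := lowerEnvS_le hScomp hq₀ v
    have hin : ⟪q₀.2, v⟫_ℝ ≤ ‖q₀.2‖ * ‖v‖ := real_inner_le_norm _ _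
    have habs1 : -q₀.1 ≤ |q₀.1| := neg_le_abs q₀.1
    have habs2 : Lh 0 ≤ |Lh 0| := le_abs_self _
    have hprod : (|q₀.1| + |Lh 0| + 1) * 1 ≤ (|q₀.1| + |Lh 0| + 1) * ‖v‖ :=
      mul_le_mul_of_nonneg_left hv1 (by positivity)
    have hcmul : c * ‖v‖ = ‖q₀.2‖ * ‖v‖ + (|q₀.1| + |Lh 0| + 1) * ‖v‖ := by
      rw [hc]; ring
    show Lh 0 < L v - lowerEnvS S v
    nlinarith
  set ρ : ℝ := max R 1 with hρ
  have hball : IsCompact (Metric.closedBall (0 : EuclideanSpace ℝ (Fin d)) ρ) :=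
    isCompact_closedBall _ _
  have h0mem : (0 : EuclideanSpace ℝ (Fin d)) ∈ Metric.closedBall 0 ρ := by
    simp only [Metric.mem_closedBall, dist_self]
    exact le_trans zero_le_one (le_max_right R 1)
  obtain ⟨vs, hvsmem, hvsmin⟩ := hball.exists_isMinOn ⟨0, h0mem⟩ Lhcont.continuousOn
  have hglobal : ∀ u, Lh vs ≤ Lh u := by
    intro u
    by_cases hu : u ∈ Metric.closedBall (0 : EuclideanSpace ℝ (Fin d)) ρ
    · exact isMinOn_iff.mp hvsmin u hu
    · have hnorm : ρ ≤ ‖u‖ := by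
        rw [Metric.mem_closedBall, dist_zero_right, not_le] at hu
        exact hu.le
      exact le_trans (isMinOn_iff.mp hvsmin 0 h0mem) (hcoer u hnorm).le
  -- Part C: the minimizer is admissible
  have hadm : IsAdmissibleS L S vs := by
    by_contra hnot
    have hAcomp : IsCompact (activeSetS S vs) := by
      have hcl : IsClosed {q : ℝ × EuclideanSpace ℝ (Fin d) |
          -q.1 + ⟪q.2, vs⟫_ℝ = lowerEnvS S vs} :=
        isClosed_eq (contPairAux vs) continuous_const
      exact hScomp.inter_right hcl
    have hAne : (activeSetS S vs).Nonempty := by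
      obtain ⟨q, hq1, hq2⟩ := exists_active hSne hScomp vs
      exact ⟨q, hq1, hq2⟩
    have hKcomp : IsCompact (convexHull ℝ (Prod.snd '' activeSetS S vs)) :=
      isCompact_convexHull_of_isCompact (hAcomp.image continuous_snd) (hAne.image _)
    obtain ⟨f, u, hfu, hub⟩ :=
      geometric_hahn_banach_point_closed (convex_convexHull ℝ _) hKcomp.isClosed hnot
    set w := (InnerProductSpace.toDual ℝ (EuclideanSpace ℝ (Fin d))).symm f with hw
    have hwf : ∀ x : EuclideanSpace ℝ (Fin d), ⟪w, x⟫_ℝ = f x := fun x =>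
      InnerProductSpace.toDual_symm_apply
    -- The delta claim: for small t, all minimizers at vs + t • w have large f-value
    have hdelta : ∃ δ > (0:ℝ), ∀ t : ℝ, 0 < t → t ≤ δ → ∀ q ∈ S,
        (-q.1 + ⟪q.2, vs + t • w⟫_ℝ = lowerEnvS S (vs + t • w)) → u ≤ f q.2 := by
      by_contra hcon
      push_neg at hcon
      choose t ht0 htle q hqS hqmin hqlt using fun n : ℕ =>
        hcon (1 / ((n : ℝ) + 1)) (by positivity)
      obtain ⟨qlim, hqlimS, φ, hφ, hqtend⟩ := hScomp.tendsto_subseq hqS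
      have htt : Filter.Tendsto t Filter.atTop (nhds 0) := by
        apply tendsto_of_tendsto_of_tendsto_of_le_of_le tendsto_const_nhds
          tendsto_one_div_add_atTop_nhds_zero_nat
        · exact fun n => (ht0 n).le
        · exact fun n => htle n
      have httφ : Filter.Tendsto (t ∘ φ) Filter.atTop (nhds 0) := htt.comp hφ.tendsto_atTop
      have hvtend : Filter.Tendsto (fun n => vs + (t (φ n)) • w) Filter.atTop (nhds vs) := by
        have h1 : Filter.Tendsto (fun n => (t (φ n)) • w) Filter.atTop
            (nhds ((0:ℝ) • w)) := httφ.smul_const w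
        rw [zero_smul] at h1
        simpa using tendsto_const_nhds.add h1
      have hΦtend : Filter.Tendsto (fun n => lowerEnvS S (vs + t (φ n) • w)) Filter.atTop
          (nhds (lowerEnvS S vs)) := (Φcont.tendsto vs).comp hvtend
      have h1 : Filter.Tendsto (fun n => (q (φ n)).1) Filter.atTop (nhds qlim.1) :=
        (continuous_fst.tendsto qlim).comp hqtend
      have h2 : Filter.Tendsto (fun n => (q (φ n)).2) Filter.atTop (nhds qlim.2) :=
        (continuous_snd.tendsto qlim).comp hqtend
      have hval : Filter.Tendsto
          (fun n => -(q (φ n)).1 + ⟪(q (φ n)).2, vs + t (φ n) • w⟫_ℝ)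
          Filter.atTop (nhds (-qlim.1 + ⟪qlim.2, vs⟫_ℝ)) :=
        (h1.neg).add (h2.inner hvtend)
      have heq : ∀ n, -(q (φ n)).1 + ⟪(q (φ n)).2, vs + t (φ n) • w⟫_ℝ
          = lowerEnvS S (vs + t (φ n) • w) := fun n => hqmin (φ n)
      have hactive : -qlim.1 + ⟪qlim.2, vs⟫_ℝ = lowerEnvS S vs :=
        tendsto_nhds_unique (hval.congr heq) hΦtend
      have hmem : qlim ∈ activeSetS S vs := ⟨hqlimS, hactive⟩
      have hlt : u < f qlim.2 :=
        hub _ (subset_convexHull ℝ _ (Set.mem_image_of_mem _ hmem))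
      have hle : f qlim.2 ≤ u :=
        le_of_tendsto ((f.continuous.tendsto _).comp h2)
          (Filter.Eventually.of_forall fun n => (hqlt (φ n)).le)
      linarith
    obtain ⟨δ, hδ, hδprop⟩ := hdelta
    have hder := hasDerivAt_line hdiff vs w
    have hlt : ⟪gradient L vs, w⟫_ℝ < u := by
      have h := hwf (gradient L vs)
      rw [real_inner_comm] at h
      rw [h]
      exact hfu
    have hslopetend : Filter.Tendsto (slope (fun t : ℝ => L (vs + t • w)) 0)
        (nhdsWithin 0 (Set.Ioi 0)) (nhds ⟪gradient L vs, w⟫_ℝ) :=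
      (hasDerivAt_iff_tendsto_slope.mp hder).mono_left
        (nhdsWithin_mono 0 (fun x hx => Set.mem_compl_singleton_iff.mpr (ne_of_gt hx)))
    have hev1 : ∀ᶠ τ in nhdsWithin (0:ℝ) (Set.Ioi 0),
        slope (fun t : ℝ => L (vs + t • w)) 0 τ < u :=
      hslopetend.eventually_lt_const hlt
    have hev2 : ∀ᶠ τ in nhdsWithin (0:ℝ) (Set.Ioi 0), τ ≤ δ := by
      filter_upwards [Ioc_mem_nhdsGT_of_mem (Set.left_mem_Ico.mpr hδ)] with τ hτ
      exact hτ.2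
    have hev3 : ∀ᶠ τ in nhdsWithin (0:ℝ) (Set.Ioi 0), (0:ℝ) < τ :=
      eventually_mem_nhdsWithin
    obtain ⟨τ, hs1, hs2, hs3⟩ := (hev1.and (hev2.and hev3)).exists
    obtain ⟨qτ, hqτS, hqτeq⟩ := exists_active hSne hScomp (vs + τ • w)
    have hfq : u ≤ f qτ.2 := hδprop τ hs3 hs2 qτ hqτS hqτeq
    have hΦlb : lowerEnvS S vs + τ * u ≤ lowerEnvS S (vs + τ • w) := by
      have h1 : lowerEnvS S vs ≤ -qτ.1 + ⟪qτ.2, vs⟫_ℝ := lowerEnvS_le hScomp hqτS vs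
      have h2 : ⟪qτ.2, vs + τ • w⟫_ℝ = ⟪qτ.2, vs⟫_ℝ + τ * ⟪qτ.2, w⟫_ℝ := by
        rw [inner_add_right, real_inner_smul_right]
      have h3 : u ≤ ⟪qτ.2, w⟫_ℝ := by
        rw [real_inner_comm, hwf]
        exact hfq
      have h4 := mul_le_mul_of_nonneg_left h3 hs3.le
      rw [← hqτeq, h2]
      linarith
    have hLlt : L (vs + τ • w) < L vs + τ * u := by
      rw [slope_def_field, div_lt_iff₀ (by linarith : (0:ℝ) < τ - 0)] at hs1
      have h0 : vs + (0:ℝ) • w = vs := by rw [zero_smul, add_zero]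
      rw [h0] at hs1
      nlinarith
    have hcontra : Lh (vs + τ • w) < Lh vs := by
      show L (vs + τ • w) - lowerEnvS S (vs + τ • w) < L vs - lowerEnvS S vs
      linarith
    exact absurd (hglobal (vs + τ • w)) (not_le.mpr hcontra)
  -- Conclusion
  refine ⟨vs, hadm, ?_, ?_⟩
  · intro v hv
    by_contra hne
    have h1 := keyA v hv vs (fun h => hne h.symm)
    have h2 := keyA vs hadm v hne
    exact absurd h1 (not_lt.mpr h2.le)
  · intro v hv
    exact keyA vs hadm v hv
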